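/- The composite q̂_A ∘ ι̂_A : ℤ → ℤ^N/(I-A)ℤ^N is the zero homomorphism, and the kernel of q̂_A equals the image of ι̂_A. -/

import Mathlib

/-- q̂_A ∘ ι̂_A = 0 and Ker(q̂_A) = Im(ι̂_A). -/
theorem stmt10 (N : ℕ) (hN : 1 < N) (A : Matrix (Fin N) (Fin N) ℤ) :
    let R : Matrix (Fin N) (Fin N) ℤ := Matrix.of fun i _ => if (i : ℕ) = 0 then 1 else 0
    let Ahat := A + R - A * R
    let ι : ℤ → (Fin N → ℤ) ⧸ LinearMap.range (1 - Ahat).mulVecLin :=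
      fun m => Submodule.Quotient.mk ((1 - A).mulVec (fun i => if (i : ℕ) = 0 then m else 0))
    ∀ q : ((Fin N → ℤ) ⧸ LinearMap.range (1 - Ahat).mulVecLin) →+
          ((Fin N → ℤ) ⧸ LinearMap.range (1 - A).mulVecLin),
      (∀ v : Fin N → ℤ, q (Submodule.Quotient.mk v) = Submodule.Quotient.mk v) →
      (∀ m : ℤ, q (ι m) = 0) ∧ (∀ x, q x = 0 ↔ ∃ m : ℤ, x = ι m) := by
  intro R Ahat ι q hq
  have hfac : (1 : Matrix (Fin N) (Fin N) ℤ) - Ahat = (1 - A) * (1 - R) := by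
    simp only [Ahat]
    noncomm_ring
  have hRv : ∀ w : Fin N → ℤ,
      R.mulVec w = fun (i : Fin N) => if (i : ℕ) = 0 then (∑ j, w j) else 0 := by
    intro w
    ext i
    simp only [R, Matrix.mulVec, dotProduct, Matrix.of_apply]
    by_cases hi : (i : ℕ) = 0 <;> simp [hi]
  have hι0 : ∀ m : ℤ, q (ι m) = 0 := by
    intro m
    rw [hq, Submodule.Quotient.mk_eq_zero]
    exact ⟨fun i => if (i : ℕ) = 0 then m else 0, by simp [Matrix.mulVecLin_apply, Matrix.sub_mulVec]⟩
  refine ⟨hι0, fun x => ⟨?_, ?_⟩⟩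
  · intro hx
    obtain ⟨v, rfl⟩ := Submodule.Quotient.mk_surjective _ x
    rw [hq, Submodule.Quotient.mk_eq_zero] at hx
    obtain ⟨w, hw⟩ := hx
    rw [Matrix.mulVecLin_apply] at hw
    refine ⟨∑ j, w j, ?_⟩
    rw [← sub_eq_zero, show ι (∑ j, w j) = Submodule.Quotient.mk
      ((1 - A).mulVec (fun i => if (i : ℕ) = 0 then (∑ j, w j) else 0)) from rfl,
      ← Submodule.Quotient.mk_sub, Submodule.Quotient.mk_eq_zero]
    refine ⟨w, ?_⟩
    rw [Matrix.mulVecLin_apply, hfac, ← Matrix.mulVec_mulVec]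
    rw [← hw, ← Matrix.mulVec_sub]
    have : (1 - R).mulVec w = w - fun (i : Fin N) => if (i : ℕ) = 0 then (∑ j, w j) else 0 := by
      rw [Matrix.sub_mulVec, hRv w, Matrix.one_mulVec]
    rw [this]
  · rintro ⟨m, rfl⟩
    exact hι0 m
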